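/- Let Q ⊆ X₁ × X₂ × X₃ be fiber-algebraic of degree ≤ d, let A₁ ⊆ X₁, A₂ ⊆ X₂, A₃ ⊆ X₃ be finite, set Q̃ := Q ∩ (A₁ × A₂ × A₃) and Q̃* := Q* ∩ (A₂ × A₂ × A₃ × A₃), where Q*(x₂,x₂',x₃,x₃') holds iff ∃x₁ with (x₁,x₂,x₃) ∈ Q and (x₁,x₂',x₃') ∈ Q. Then |Q̃| ≤ d · |A₁|^{1/2} · |Q̃*|^{1/2}. -/

import Mathlib

/-- Cauchy–Schwarz bound: for `Q ⊆ X₁ × X₂ × X₃` fiber-algebraic of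
degree `≤ d` and finite `A₁, A₂, A₃`, with `Q̃ := Q ∩ (A₁ × A₂ × A₃)` and
`Q̃* := Q* ∩ (A₂ × A₂ × A₃ × A₃)`, one has `|Q̃| ≤ d |A₁|^{1/2} |Q̃*|^{1/2}`. -/
theorem statement15 {X₁ X₂ X₃ : Type*} (d : ℕ) (Q : X₁ → X₂ → X₃ → Prop)
    (h1 : ∀ x₂ x₃, {x₁ : X₁ | Q x₁ x₂ x₃}.encard ≤ (d : ℕ∞))
    (h2 : ∀ x₁ x₃, {x₂ : X₂ | Q x₁ x₂ x₃}.encard ≤ (d : ℕ∞))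
    (h3 : ∀ x₁ x₂, {x₃ : X₃ | Q x₁ x₂ x₃}.encard ≤ (d : ℕ∞))
    (A₁ : Finset X₁) (A₂ : Finset X₂) (A₃ : Finset X₃) :
    ({p : X₁ × X₂ × X₃ | Q p.1 p.2.1 p.2.2 ∧
        p.1 ∈ A₁ ∧ p.2.1 ∈ A₂ ∧ p.2.2 ∈ A₃}.ncard : ℝ) ≤
      (d : ℝ) * Real.sqrt (A₁.card : ℝ) *
        Real.sqrt (({q : X₂ × X₂ × X₃ × X₃ |
          (∃ x₁, Q x₁ q.1 q.2.2.1 ∧ Q x₁ q.2.1 q.2.2.2) ∧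
          q.1 ∈ A₂ ∧ q.2.1 ∈ A₂ ∧ q.2.2.1 ∈ A₃ ∧ q.2.2.2 ∈ A₃}.ncard : ℝ)) := by
  classical
  have hSset : {p : X₁ × X₂ × X₃ | Q p.1 p.2.1 p.2.2 ∧
      p.1 ∈ A₁ ∧ p.2.1 ∈ A₂ ∧ p.2.2 ∈ A₃}.ncard
      = ((A₁ ×ˢ A₂ ×ˢ A₃).filter (fun p => Q p.1 p.2.1 p.2.2)).card := by
    rw [← Set.ncard_coe_finset]
    congr 1
    ext p
    simp only [Finset.coe_filter, Finset.mem_product, Set.mem_setOf_eq]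
    tauto
  have hTset : {q : X₂ × X₂ × X₃ × X₃ |
      (∃ x₁, Q x₁ q.1 q.2.2.1 ∧ Q x₁ q.2.1 q.2.2.2) ∧
      q.1 ∈ A₂ ∧ q.2.1 ∈ A₂ ∧ q.2.2.1 ∈ A₃ ∧ q.2.2.2 ∈ A₃}.ncard
      = ((A₂ ×ˢ A₂ ×ˢ A₃ ×ˢ A₃).filter
          (fun q => ∃ x₁, Q x₁ q.1 q.2.2.1 ∧ Q x₁ q.2.1 q.2.2.2)).card := by
    rw [← Set.ncard_coe_finset]
    congr 1
    ext q
    simp only [Finset.coe_filter, Finset.mem_product, Set.mem_setOf_eq]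
    tauto
  rw [hSset, hTset]
  -- S.card = ∑ f
  have hcard : ((A₁ ×ˢ A₂ ×ˢ A₃).filter (fun p => Q p.1 p.2.1 p.2.2)).card
      = ∑ a ∈ A₁, ((A₂ ×ˢ A₃).filter (fun r => Q a r.1 r.2)).card := by
    rw [Finset.card_eq_sum_card_fiberwise (f := Prod.fst) (t := A₁)
      (fun p hp => by simp only [Finset.mem_coe, Finset.mem_filter, Finset.mem_product] at hp ⊢; tauto)]
    refine Finset.sum_congr rfl fun a ha => ?_
    refine Finset.card_bij (fun p _ => p.2) ?_ ?_ ?_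
    · intro p hp
      simp only [Finset.mem_filter, Finset.mem_product] at hp ⊢
      obtain ⟨⟨⟨ha1, ha2, ha3⟩, hq⟩, hfst⟩ := hp
      subst hfst
      exact ⟨⟨ha2, ha3⟩, hq⟩
    · intro p hp p' hp' h
      simp only [Finset.mem_filter] at hp hp'
      exact Prod.ext (hp.2.trans hp'.2.symm) h
    · intro r hr
      simp only [Finset.mem_filter, Finset.mem_product] at hr
      exact ⟨(a, r), by
        simp only [Finset.mem_filter, Finset.mem_product]
        tauto, rfl⟩
  -- f a ^ 2 as a card of quadruple filter
  have hsq : ∀ a : X₁, ((A₂ ×ˢ A₃).filter (fun r => Q a r.1 r.2)).card ^ 2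
      = ((A₂ ×ˢ A₂ ×ˢ A₃ ×ˢ A₃).filter
          (fun q => Q a q.1 q.2.2.1 ∧ Q a q.2.1 q.2.2.2)).card := by
    intro a
    rw [sq, ← Finset.card_product]
    refine Finset.card_bij (fun z _ => (z.1.1, z.2.1, z.1.2, z.2.2)) ?_ ?_ ?_
    · intro z hz
      simp only [Finset.mem_product, Finset.mem_filter] at hz ⊢
      exact ⟨⟨hz.1.1.1, hz.2.1.1, hz.1.1.2, hz.2.1.2⟩, hz.1.2, hz.2.2⟩
    · intro z hz z' hz' h
      simp only [Prod.mk.injEq] at h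
      obtain ⟨e1, e2, e3, e4⟩ := h
      exact Prod.ext (Prod.ext e1 e3) (Prod.ext e2 e4)
    · intro q hq
      simp only [Finset.mem_filter, Finset.mem_product] at hq
      exact ⟨((q.1, q.2.2.1), (q.2.1, q.2.2.2)), by
        simp only [Finset.mem_product, Finset.mem_filter]
        exact ⟨⟨⟨hq.1.1, hq.1.2.2.1⟩, hq.2.1⟩, ⟨hq.1.2.1, hq.1.2.2.2⟩, hq.2.2⟩, rfl⟩
  -- key bound on sum of squares
  have hkey : ∑ a ∈ A₁, ((A₂ ×ˢ A₃).filter (fun r => Q a r.1 r.2)).card ^ 2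
      ≤ d * ((A₂ ×ˢ A₂ ×ˢ A₃ ×ˢ A₃).filter
          (fun q => ∃ x₁, Q x₁ q.1 q.2.2.1 ∧ Q x₁ q.2.1 q.2.2.2)).card := by
    calc ∑ a ∈ A₁, ((A₂ ×ˢ A₃).filter (fun r => Q a r.1 r.2)).card ^ 2
        = ∑ a ∈ A₁, ((A₂ ×ˢ A₂ ×ˢ A₃ ×ˢ A₃).filter
            (fun q => Q a q.1 q.2.2.1 ∧ Q a q.2.1 q.2.2.2)).card :=
          Finset.sum_congr rfl fun a _ => hsq a
      _ = ∑ q ∈ (A₂ ×ˢ A₂ ×ˢ A₃ ×ˢ A₃),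
            (A₁.filter (fun a => Q a q.1 q.2.2.1 ∧ Q a q.2.1 q.2.2.2)).card := by
          simp only [Finset.card_filter]
          exact Finset.sum_comm
      _ = ∑ q ∈ (A₂ ×ˢ A₂ ×ˢ A₃ ×ˢ A₃).filter
            (fun q => ∃ x₁, Q x₁ q.1 q.2.2.1 ∧ Q x₁ q.2.1 q.2.2.2),
            (A₁.filter (fun a => Q a q.1 q.2.2.1 ∧ Q a q.2.1 q.2.2.2)).card := by
          rw [Finset.sum_filter_of_ne]
          intro q _ hne
          obtain ⟨a, ha⟩ := Finset.card_pos.mp (Nat.pos_of_ne_zero hne)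
          simp only [Finset.mem_filter] at ha
          exact ⟨a, ha.2⟩
      _ ≤ ∑ _q ∈ (A₂ ×ˢ A₂ ×ˢ A₃ ×ˢ A₃).filter
            (fun q => ∃ x₁, Q x₁ q.1 q.2.2.1 ∧ Q x₁ q.2.1 q.2.2.2), d := by
          refine Finset.sum_le_sum fun q _ => ?_
          have hfin := Set.encard_le_coe_iff_finite_ncard_le.mp (h1 q.1 q.2.2.1)
          calc (A₁.filter (fun a => Q a q.1 q.2.2.1 ∧ Q a q.2.1 q.2.2.2)).card
              = ((A₁.filter (fun a => Q a q.1 q.2.2.1 ∧ Q a q.2.1 q.2.2.2) :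
                  Finset X₁) : Set X₁).ncard := (Set.ncard_coe_finset _).symm
            _ ≤ {x₁ : X₁ | Q x₁ q.1 q.2.2.1}.ncard := by
                refine Set.ncard_le_ncard ?_ hfin.1
                intro a ha
                simp only [Finset.coe_filter, Set.mem_setOf_eq] at ha
                exact ha.2.1
            _ ≤ d := hfin.2
      _ = d * ((A₂ ×ˢ A₂ ×ˢ A₃ ×ˢ A₃).filter
            (fun q => ∃ x₁, Q x₁ q.1 q.2.2.1 ∧ Q x₁ q.2.1 q.2.2.2)).card := by
          rw [Finset.sum_const, smul_eq_mul, mul_comm]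
  -- pass to ℝ
  set a : ℝ := (((A₁ ×ˢ A₂ ×ˢ A₃).filter (fun p => Q p.1 p.2.1 p.2.2)).card : ℝ) with hadef
  set n : ℝ := (A₁.card : ℝ) with hndef
  set t : ℝ := (((A₂ ×ˢ A₂ ×ˢ A₃ ×ˢ A₃).filter
      (fun q => ∃ x₁, Q x₁ q.1 q.2.2.1 ∧ Q x₁ q.2.1 q.2.2.2)).card : ℝ) with htdef
  have ha0 : 0 ≤ a := Nat.cast_nonneg _
  have hn0 : 0 ≤ n := Nat.cast_nonneg _
  have ht0 : 0 ≤ t := Nat.cast_nonneg _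
  have hCS : a ^ 2 ≤ n * ∑ x ∈ A₁, (((A₂ ×ˢ A₃).filter (fun r => Q x r.1 r.2)).card : ℝ) ^ 2 := by
    have h := sq_sum_le_card_mul_sum_sq
      (s := A₁) (f := fun x => (((A₂ ×ˢ A₃).filter (fun r => Q x r.1 r.2)).card : ℝ))
    calc a ^ 2 = (∑ x ∈ A₁, (((A₂ ×ˢ A₃).filter (fun r => Q x r.1 r.2)).card : ℝ)) ^ 2 := by
          rw [show a = ∑ x ∈ A₁, (((A₂ ×ˢ A₃).filter (fun r => Q x r.1 r.2)).card : ℝ) by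
            rw [hadef, hcard]; push_cast; rfl]
      _ ≤ _ := h
  have hkeyR : ∑ x ∈ A₁, (((A₂ ×ˢ A₃).filter (fun r => Q x r.1 r.2)).card : ℝ) ^ 2
      ≤ (d : ℝ) * t := by rw [htdef]; exact_mod_cast hkey
  have hsq2 : a ^ 2 ≤ ((d : ℝ) * Real.sqrt n * Real.sqrt t) ^ 2 := by
    have hrhs : ((d : ℝ) * Real.sqrt n * Real.sqrt t) ^ 2 = (d : ℝ) ^ 2 * (n * t) := by
      rw [mul_pow, mul_pow, Real.sq_sqrt hn0, Real.sq_sqrt ht0]; ring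
    rw [hrhs]
    have hd : (d : ℝ) ≤ (d : ℝ) ^ 2 := by
      have : d ≤ d ^ 2 := by nlinarith
      exact_mod_cast this
    calc a ^ 2 ≤ n * ((d : ℝ) * t) := hCS.trans (mul_le_mul_of_nonneg_left hkeyR hn0)
      _ = (d : ℝ) * (n * t) := by ring
      _ ≤ (d : ℝ) ^ 2 * (n * t) :=
          mul_le_mul_of_nonneg_right hd (mul_nonneg hn0 ht0)
  have hb0 : 0 ≤ (d : ℝ) * Real.sqrt n * Real.sqrt t := by positivity
  calc a = Real.sqrt (a ^ 2) := (Real.sqrt_sq ha0).symm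
    _ ≤ Real.sqrt (((d : ℝ) * Real.sqrt n * Real.sqrt t) ^ 2) := Real.sqrt_le_sqrt hsq2
    _ = (d : ℝ) * Real.sqrt n * Real.sqrt t := Real.sqrt_sq hb0
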